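/- For every fixed j ∈ ℤ² \ {0}, the family of nonnegative terms ( [i,j]⁴·(|i|² + |j|²)/(|i|²·|j|²·|i−j|²·|i+j|²) ) indexed by i ∈ ℤ² \ {0, j, −j} is NOT summable. (Hence the Ricci curvature of the L² metric on the volume-preserving diffeomorphism group of T², whose diagonal coefficient on A_j is minus this sum, is given by a divergent quantity.) -/

import Mathlib

open Real

/-- Euclidean norm of a lattice point `k ∈ ℤ²`. -/
noncomputable def nZ (k : ℤ × ℤ) : ℝ := Real.sqrt ((k.1 : ℝ) ^ 2 + (k.2 : ℝ) ^ 2)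

/-- `k · θ`. -/
noncomputable def dotZ (k : ℤ × ℤ) (θ : ℝ × ℝ) : ℝ := (k.1 : ℝ) * θ.1 + (k.2 : ℝ) * θ.2

/-- The vector field `A^s_k(θ) = |k|^{-(s+1)} cos(k·θ)·(k₂, -k₁)` (zero for `k = 0`). -/
noncomputable def vfA (s : ℝ) (k : ℤ × ℤ) (θ : ℝ × ℝ) : ℝ × ℝ :=
  ((nZ k) ^ (-(s + 1)) * Real.cos (dotZ k θ)) • ((k.2 : ℝ), -(k.1 : ℝ))

/-- The vector field `B^s_k(θ) = |k|^{-(s+1)} sin(k·θ)·(k₂, -k₁)` (zero for `k = 0`). -/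
noncomputable def vfB (s : ℝ) (k : ℤ × ℤ) (θ : ℝ × ℝ) : ℝ × ℝ :=
  ((nZ k) ^ (-(s + 1)) * Real.sin (dotZ k θ)) • ((k.2 : ℝ), -(k.1 : ℝ))

/-- `[k,l] = k₁ l₂ - k₂ l₁`. -/
noncomputable def crossZ (k l : ℤ × ℤ) : ℝ := (k.1 : ℝ) * (l.2 : ℝ) - (k.2 : ℝ) * (l.1 : ℝ)

lemma nZ_sq (k : ℤ × ℤ) : nZ k ^ 2 = (k.1 : ℝ) ^ 2 + (k.2 : ℝ) ^ 2 := by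
  unfold nZ
  exact Real.sq_sqrt (by positivity)

theorem ricci_not_summable (j : ℤ × ℤ) (hj : j ≠ 0) :
    ¬ Summable (fun i : {i : ℤ × ℤ // i ≠ 0 ∧ i ≠ j ∧ i ≠ -j} =>
      (crossZ (i : ℤ × ℤ) j) ^ 4 * ((nZ (i : ℤ × ℤ)) ^ 2 + (nZ j) ^ 2)
        / ((nZ (i : ℤ × ℤ)) ^ 2 * (nZ j) ^ 2
            * (nZ ((i : ℤ × ℤ) - j)) ^ 2 * (nZ ((i : ℤ × ℤ) + j)) ^ 2)) := by
  intro h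
  set N : ℝ := (j.1 : ℝ) ^ 2 + (j.2 : ℝ) ^ 2 with hNdef
  have hj' : j.1 ≠ 0 ∨ j.2 ≠ 0 := by
    by_contra h'
    push_neg at h'
    exact hj (Prod.ext h'.1 h'.2)
  have hNpos : 0 < N := by
    rcases hj' with h1 | h1
    · have : (0:ℝ) < (j.1:ℝ)^2 := by positivity
      nlinarith [sq_nonneg ((j.2:ℝ))]
    · have : (0:ℝ) < (j.2:ℝ)^2 := by positivity
      nlinarith [sq_nonneg ((j.1:ℝ))]
  -- the lattice points i_n = (n+1) • (-j₂, j₁)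
  have hmem : ∀ n : ℕ, ((-((n:ℤ)+1) * j.2, ((n:ℤ)+1) * j.1) : ℤ × ℤ) ≠ 0 ∧
      ((-((n:ℤ)+1) * j.2, ((n:ℤ)+1) * j.1) : ℤ × ℤ) ≠ j ∧
      ((-((n:ℤ)+1) * j.2, ((n:ℤ)+1) * j.1) : ℤ × ℤ) ≠ -j := by
    intro n
    set m : ℤ := (n:ℤ) + 1 with hm
    have hmpos : 0 < m := by omega
    refine ⟨?_, ?_, ?_⟩
    · intro he
      rw [Prod.ext_iff] at he
      simp only [Prod.fst_zero, Prod.snd_zero] at he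
      have h1 : j.2 = 0 := by
        rcases mul_eq_zero.mp he.1 with h | h
        · omega
        · exact h
      have h2 : j.1 = 0 := by
        rcases mul_eq_zero.mp he.2 with h | h
        · omega
        · exact h
      exact hj (Prod.ext h2 h1)
    · intro he
      rw [Prod.ext_iff] at he
      obtain ⟨h1, h2⟩ := he
      have h3 : j.2 * (1 + m ^ 2) = 0 := by linear_combination -h2 - m * h1
      have h4 : j.2 = 0 := by
        rcases mul_eq_zero.mp h3 with h | h
        · exact h
        · nlinarith
      have h5 : j.1 = 0 := by
        rw [h4] at h1; simpa using h1.symm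
      exact hj (Prod.ext h5 h4)
    · intro he
      rw [Prod.ext_iff] at he
      obtain ⟨h1, h2⟩ := he
      simp only [Prod.fst_neg, Prod.snd_neg] at h1 h2
      have h3 : j.2 * (1 + m ^ 2) = 0 := by linear_combination h2 - m * h1
      have h4 : j.2 = 0 := by
        rcases mul_eq_zero.mp h3 with h | h
        · exact h
        · nlinarith
      have h5 : j.1 = 0 := by
        rw [h4] at h1
        simp only [mul_zero, neg_mul, neg_zero] at h1
        omega
      exact hj (Prod.ext h5 h4)
  set g : ℕ → {i : ℤ × ℤ // i ≠ 0 ∧ i ≠ j ∧ i ≠ -j} :=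
    fun n => ⟨(-((n:ℤ)+1) * j.2, ((n:ℤ)+1) * j.1), hmem n⟩ with hg
  have hginj : Function.Injective g := by
    intro a b hab
    rw [hg] at hab
    simp only [Subtype.mk.injEq, Prod.mk.injEq] at hab
    rcases hj' with h1 | h1
    · have := hab.2
      have : ((a:ℤ)+1) = ((b:ℤ)+1) := mul_right_cancel₀ h1 this
      omega
    · have := hab.1
      have : (-((a:ℤ)+1)) = (-((b:ℤ)+1)) := mul_right_cancel₀ h1 this
      omega
  have key : ∀ n : ℕ, N / 2 ≤
      (crossZ ((g n : ℤ × ℤ)) j) ^ 4 * ((nZ ((g n : ℤ × ℤ))) ^ 2 + (nZ j) ^ 2)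
        / ((nZ ((g n : ℤ × ℤ))) ^ 2 * (nZ j) ^ 2
            * (nZ (((g n : ℤ × ℤ)) - j)) ^ 2 * (nZ (((g n : ℤ × ℤ)) + j)) ^ 2) := by
    intro n
    set m : ℝ := (n : ℝ) + 1 with hmr
    have hm1 : (1:ℝ) ≤ m := by
      rw [hmr]; have : (0:ℝ) ≤ (n:ℝ) := Nat.cast_nonneg n; linarith
    have hmpos : (0:ℝ) < m := by linarith
    have hval : (g n : ℤ × ℤ) = (-((n:ℤ)+1) * j.2, ((n:ℤ)+1) * j.1) := rfl
    rw [hval]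
    rw [crossZ, nZ_sq, nZ_sq, nZ_sq, nZ_sq]
    simp only [Prod.fst_sub, Prod.snd_sub, Prod.fst_add, Prod.snd_add]
    push_cast
    have e1 : ((-((n:ℝ)+1) * (j.2:ℝ)) * (j.2:ℝ) - (((n:ℝ)+1) * (j.1:ℝ)) * (j.1:ℝ)) = -m * N := by
      rw [hmr, hNdef]; ring
    have e2 : ((-((n:ℝ)+1) * (j.2:ℝ)) ^ 2 + (((n:ℝ)+1) * (j.1:ℝ)) ^ 2) = m ^ 2 * N := by
      rw [hmr, hNdef]; ring
    have e3 : ((-((n:ℝ)+1) * (j.2:ℝ) - (j.1:ℝ)) ^ 2 + (((n:ℝ)+1) * (j.1:ℝ) - (j.2:ℝ)) ^ 2)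
        = (m ^ 2 + 1) * N := by
      rw [hmr, hNdef]; ring
    have e4 : ((-((n:ℝ)+1) * (j.2:ℝ) + (j.1:ℝ)) ^ 2 + (((n:ℝ)+1) * (j.1:ℝ) + (j.2:ℝ)) ^ 2)
        = (m ^ 2 + 1) * N := by
      rw [hmr, hNdef]; ring
    rw [e1, e2, e3, e4]
    rw [show ((j.1:ℝ)^2 + (j.2:ℝ)^2) = N from rfl]
    have heq : (-m * N) ^ 4 * (m ^ 2 * N + N)
        / (m ^ 2 * N * N * ((m ^ 2 + 1) * N) * ((m ^ 2 + 1) * N))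
        = m ^ 2 * N / (m ^ 2 + 1) := by
      have hN0 : N ≠ 0 := ne_of_gt hNpos
      have hm0 : m ≠ 0 := ne_of_gt hmpos
      have hm20 : m ^ 2 + 1 ≠ 0 := by positivity
      field_simp
    rw [heq]
    rw [le_div_iff₀ (by positivity)]
    nlinarith [hNpos, hm1, sq_nonneg (m - 1), mul_pos hNpos hmpos]
  have h0 := h.tendsto_cofinite_zero
  have hev := h0.eventually (gt_mem_nhds (by linarith : (0:ℝ) < N / 2))
  rw [Filter.eventually_cofinite] at hev
  exact Set.infinite_range_of_injective hginj
    (hev.subset (by rintro _ ⟨n, rfl⟩; exact not_lt.mpr (key n)))
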